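/- No word of the form μ(w), where w is a binary word, contains 000 as a subword. -/

import Mathlib

/-- The Thue-Morse morphism: μ(0)=01, μ(1)=10, with 0 = `false`, 1 = `true`. -/
def mu (w : List Bool) : List Bool := w.flatMap fun b => [b, !b]

lemma mu_cons (b : Bool) (w : List Bool) : mu (b :: w) = b :: (!b) :: mu w := rfl

lemma mu_pair : ∀ (w : List Bool) (i : ℕ) (h : 2*i+1 < (mu w).length),
    (mu w)[2*i+1] = !(mu w)[2*i]'(by omega) := by
  intro w
  induction w with
  | nil => intro i h; simp [mu] at h
  | cons b w ih =>
    intro i h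
    simp only [mu_cons] at h ⊢
    cases i with
    | zero => simp
    | succ i =>
      have h2 : 2*i+1 < (mu w).length := by
        simp [List.length_cons] at h; omega
      have e1 : 2*(i+1)+1 = (2*i+1) + 2 := by omega
      have e2 : 2*(i+1) = (2*i) + 2 := by omega
      simp only [e1, e2, List.getElem_cons_succ]
      exact ih i h2

theorem mu_no_cube_000 (w : List Bool) :
    ¬ ([false, false, false] <:+: mu w) := by
  rintro ⟨s, t, hst⟩
  set n := s.length with hn
  have hlen : (mu w).length = n + 3 + t.length := by
    rw [← hst]; simp; omega
  have hval : ∀ j, (hj : j < 3) → (mu w)[n + j]'(by omega) = false := by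
    intro j hj
    have : (mu w)[n+j]'(by omega) = (s ++ [false,false,false] ++ t)[n+j]'(by rw [hst]; omega) := by
      congr 1; exact hst.symm
    rw [this, List.getElem_append_left (as := s ++ [false,false,false]) (by simp; omega),
      List.getElem_append_right (as := s) (i := n+j) (Nat.le_add_right n j)]
    have : n + j - s.length = j := by rw [hn]; omega
    simp only [this]
    interval_cases j <;> rfl
  rcases Nat.even_or_odd n with ⟨i, hi⟩ | ⟨i, hi⟩
  · have := mu_pair w i (by omega)
    have e0 := hval 0 (by omega)
    have e1 := hval 1 (by omega)
    simp only [show 2*i = n + 0 by omega, show 2*i+1 = n+1 by omega, e0, e1] at this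
    simp at this
  · have := mu_pair w (i+1) (by omega)
    have e1 := hval 1 (by omega)
    have e2 := hval 2 (by omega)
    simp only [show 2*(i+1) = n + 1 by omega, show 2*(i+1)+1 = n+2 by omega, e1, e2] at this
    simp at this
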